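/- Let A = (a_ij) ∈ ℝ^{m×n} with m ≥ n. For i = 1,…,n define r_i = Σ_{j≠i, j≤n} |a_ij|, c_i = Σ_{j≠i, j≤m} |a_ji|, s_i = max(r_i, c_i), a_i = |a_ii|, and s = max_{n+1≤i≤m} Σ_{j=1}^n |a_ij| (with s = 0 if m = n). Then every singular value of A lies in one of the real intervals B_i = [max(a_i − s_i, 0), a_i + s_i] for i = 1,…,n, or in B_{n+1} = [0, s]. -/

import Mathlib

open Matrix Finset

/-- Singular values: square roots of the eigenvalues of `Aᵀ A`. -/
noncomputable def singularValues {m n : ℕ} (A : Matrix (Fin m) (Fin n) ℝ) : Fin n → ℝ :=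
  fun i => Real.sqrt ((show (Aᵀ * A).IsHermitian by
    simpa using Matrix.isHermitian_conjTranspose_mul_self A).eigenvalues i)

lemma qi_aux {σ a s x y M : ℝ} (hσ : 0 ≤ σ) (hM : 0 < M) (hy : |y| ≤ M) (hx : |x| = M)
    (h1 : |σ * x - a * y| ≤ s * M) (h2 : |σ * y - a * x| ≤ s * M) :
    |a| - s ≤ σ ∧ σ ≤ |a| + s := by
  have hσy : |σ * y| ≤ σ * M := by
    rw [abs_mul, abs_of_nonneg hσ]; exact mul_le_mul_of_nonneg_left hy hσ
  constructor
  · have key : |a| * M ≤ σ * M + s * M := by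
      calc |a| * M = |a * x| := by rw [abs_mul, hx]
        _ = |σ * y - (σ * y - a * x)| := by ring_nf
        _ ≤ |σ * y| + |σ * y - a * x| := abs_sub _ _
        _ ≤ σ * M + s * M := add_le_add hσy h2
    nlinarith
  · have key : σ * M ≤ |a| * M + s * M := by
      calc σ * M = |σ * x| := by rw [abs_mul, abs_of_nonneg hσ, hx]
        _ = |a * y + (σ * x - a * y)| := by ring_nf
        _ ≤ |a * y| + |σ * x - a * y| := abs_add_le _ _
        _ ≤ |a| * M + s * M := by
            rw [abs_mul]
            exact add_le_add (mul_le_mul_of_nonneg_left hy (abs_nonneg a)) h1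
    nlinarith

lemma qi_sum_aux {α : Type*} (t : Finset α) (f g : α → ℝ) {M : ℝ}
    (h : ∀ j ∈ t, |g j| ≤ M) : |∑ j ∈ t, f j * g j| ≤ (∑ j ∈ t, |f j|) * M := by
  calc |∑ j ∈ t, f j * g j| ≤ ∑ j ∈ t, |f j * g j| := Finset.abs_sum_le_sum_abs _ _
    _ ≤ ∑ j ∈ t, |f j| * M := Finset.sum_le_sum fun j hj => by
        rw [abs_mul]; exact mul_le_mul_of_nonneg_left (h j hj) (abs_nonneg _)
    _ = _ := (Finset.sum_mul _ _ _).symm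

/-- Gershgorin-type localization of singular values (Qi, 1984): every singular value
of `A ∈ ℝ^{m×n}` (`m ≥ n`) lies in one of the intervals
`B_i = [max(a_i − s_i, 0), a_i + s_i]`, `i = 1,…,n`, or in `B_{n+1} = [0, s]`. -/
theorem singularValues_gershgorin {m n : ℕ} (hnm : n ≤ m)
    (A : Matrix (Fin m) (Fin n) ℝ) :
    ∀ k : Fin n,
      (∃ i : Fin n,
        singularValues A k ∈
          Set.Icc
            (max (|A (Fin.castLE hnm i) i| -
              max (∑ j ∈ Finset.univ.erase i, |A (Fin.castLE hnm i) j|)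
                  (∑ j ∈ Finset.univ.erase (Fin.castLE hnm i), |A j i|)) 0)
            (|A (Fin.castLE hnm i) i| +
              max (∑ j ∈ Finset.univ.erase i, |A (Fin.castLE hnm i) j|)
                  (∑ j ∈ Finset.univ.erase (Fin.castLE hnm i), |A j i|))) ∨
      singularValues A k ∈
        Set.Icc (0 : ℝ)
          ((Finset.univ.filter fun i : Fin m => n ≤ (i : ℕ)).fold max 0
            fun i => ∑ j, |A i j|) := by
  intro k
  set hA := (show (Aᵀ * A).IsHermitian by
    simpa using Matrix.isHermitian_conjTranspose_mul_self A) with hAdef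
  set lam := hA.eigenvalues k with hlamdef
  have hlam0 : 0 ≤ lam := Matrix.eigenvalues_conjTranspose_mul_self_nonneg A k
  set σ := singularValues A k with hσdef
  have hσ0 : 0 ≤ σ := Real.sqrt_nonneg _
  have hσσ : σ * σ = lam := Real.mul_self_sqrt hlam0
  by_cases hσz : σ = 0
  · right
    refine ⟨hσ0, ?_⟩
    rw [hσz]
    exact (Finset.le_fold_max _).mpr (Or.inl le_rfl)
  -- eigenvector
  set v : EuclideanSpace ℝ (Fin n) := hA.eigenvectorBasis k with hvdef
  have hmul : (Aᴴ * A) *ᵥ ⇑v = lam • ⇑v := hA.mulVec_eigenvectorBasis k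
  have hv_ne : ∃ j, v j ≠ 0 := by
    by_contra h
    push_neg at h
    have hv0 : v = 0 := PiLp.ext h
    have := hA.eigenvectorBasis.orthonormal.1 k
    rw [← hvdef, hv0, norm_zero] at this
    exact one_ne_zero this.symm
  set w : Fin m → ℝ := A *ᵥ ⇑v with hwdef
  set u : Fin m → ℝ := fun i => σ⁻¹ * w i with hudef
  have hw_apply : ∀ i : Fin m, w i = ∑ j, A i j * v j := by
    intro i; simp [hwdef, Matrix.mulVec, dotProduct]
  have eqU : ∀ i : Fin m, ∑ j, A i j * v j = σ * u i := by
    intro i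
    rw [hudef]
    field_simp
    exact (hw_apply i).symm
  have hAtw : ∀ j : Fin n, ∑ i, A i j * w i = lam * v j := by
    intro j
    have h1 := congrFun hmul j
    rw [← Matrix.mulVec_mulVec] at h1
    simpa [hwdef, Matrix.mulVec, dotProduct, Matrix.conjTranspose_apply, mul_comm,
      Pi.smul_apply, smul_eq_mul] using h1
  have eqV : ∀ j : Fin n, ∑ i, A i j * u i = σ * v j := by
    intro j
    have : ∑ i, A i j * u i = σ⁻¹ * ∑ i, A i j * w i := by
      rw [Finset.mul_sum]; congr 1; funext i; rw [hudef]; ring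
    rw [this, hAtw j, ← hσσ]
    field_simp
  -- dominant coordinate
  obtain ⟨p, -, hp⟩ := Finset.exists_max_image (univ : Finset (Fin m ⊕ Fin n))
    (Sum.elim (fun i => |u i|) (fun j => |v j|)) ⟨Sum.inr k, mem_univ _⟩
  set M := Sum.elim (fun i => |u i|) (fun j => |v j|) p with hMdef
  have hu_le : ∀ i : Fin m, |u i| ≤ M := fun i => hp (Sum.inl i) (mem_univ _)
  have hv_le : ∀ j : Fin n, |v j| ≤ M := fun j => hp (Sum.inr j) (mem_univ _)
  have hM : 0 < M := by
    obtain ⟨j0, hj0⟩ := hv_ne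
    exact lt_of_lt_of_le (abs_pos.mpr hj0) (hv_le j0)
  -- the two key inequalities, for any column index i
  have key : ∀ i : Fin n,
      |σ * v i - A (Fin.castLE hnm i) i * u (Fin.castLE hnm i)| ≤
        (max (∑ j ∈ Finset.univ.erase i, |A (Fin.castLE hnm i) j|)
             (∑ j ∈ Finset.univ.erase (Fin.castLE hnm i), |A j i|)) * M ∧
      |σ * u (Fin.castLE hnm i) - A (Fin.castLE hnm i) i * v i| ≤
        (max (∑ j ∈ Finset.univ.erase i, |A (Fin.castLE hnm i) j|)
             (∑ j ∈ Finset.univ.erase (Fin.castLE hnm i), |A j i|)) * M := by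
    intro i
    set ih := Fin.castLE hnm i with hihdef
    constructor
    · have hsplit : σ * v i = A ih i * u ih + ∑ j ∈ Finset.univ.erase ih, A j i * u j := by
        rw [← eqV i, ← Finset.add_sum_erase _ _ (mem_univ ih)]
      have : σ * v i - A ih i * u ih = ∑ j ∈ Finset.univ.erase ih, A j i * u j := by
        rw [hsplit]; ring
      rw [this]
      calc |∑ j ∈ Finset.univ.erase ih, A j i * u j|
          ≤ (∑ j ∈ Finset.univ.erase ih, |A j i|) * M :=
            qi_sum_aux _ _ _ (fun j _ => hu_le j)
        _ ≤ _ := mul_le_mul_of_nonneg_right (le_max_right _ _) hM.le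
    · have hsplit : σ * u ih = A ih i * v i + ∑ j ∈ Finset.univ.erase i, A ih j * v j := by
        rw [← eqU ih, ← Finset.add_sum_erase _ _ (mem_univ i)]
      have : σ * u ih - A ih i * v i = ∑ j ∈ Finset.univ.erase i, A ih j * v j := by
        rw [hsplit]; ring
      rw [this]
      calc |∑ j ∈ Finset.univ.erase i, A ih j * v j|
          ≤ (∑ j ∈ Finset.univ.erase i, |A ih j|) * M :=
            qi_sum_aux _ _ _ (fun j _ => hv_le j)
        _ ≤ _ := mul_le_mul_of_nonneg_right (le_max_left _ _) hM.le
  rcases p with i | j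
  · -- dominant coordinate is |u i|
    by_cases hi : (i : ℕ) < n
    · -- i corresponds to a column
      left
      set i' : Fin n := ⟨(i : ℕ), hi⟩ with hi'def
      have hcast : Fin.castLE hnm i' = i := rfl
      obtain ⟨h1, h2⟩ := key i'
      rw [hcast] at h1 h2
      have hxM : |u i| = M := rfl
      obtain ⟨hlow, hhigh⟩ := qi_aux hσ0 hM (hv_le i') hxM h2 h1
      exact ⟨i', max_le (by rw [hcast]; linarith) hσ0, by rw [hcast]; linarith⟩
    · -- excess row
      right
      push_neg at hi
      refine ⟨hσ0, ?_⟩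
      have hxM : |u i| = M := rfl
      have hrow : σ ≤ ∑ j, |A i j| := by
        have h1 : σ * M ≤ (∑ j, |A i j|) * M := by
          calc σ * M = |σ * u i| := by rw [abs_mul, abs_of_nonneg hσ0, hxM]
            _ = |∑ j, A i j * v j| := by rw [eqU i]
            _ ≤ (∑ j, |A i j|) * M := qi_sum_aux _ _ _ (fun j _ => hv_le j)
        exact le_of_mul_le_mul_right h1 hM
      exact hrow.trans ((Finset.le_fold_max _).mpr
        (Or.inr ⟨i, Finset.mem_filter.mpr ⟨mem_univ _, hi⟩, le_rfl⟩))
  · -- dominant coordinate is |v j|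
    left
    obtain ⟨h1, h2⟩ := key j
    have hxM : |v j| = M := rfl
    obtain ⟨hlow, hhigh⟩ := qi_aux hσ0 hM (hu_le (Fin.castLE hnm j)) hxM h1 h2
    exact ⟨j, max_le (by linarith) hσ0, by linarith⟩
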